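/- Let k₁ : M₁ → L and k₂ : M₂ → L be two compactifications of a frame L. Then there exists a frame homomorphism h : M₁ → M₂ with k₁ = k₂ ∘ h if and only if C_{k₁} ⊆ C_{k₂}, i.e. if and only if every compact regular frame L' and frame homomorphism f : L' → L such that ⊲_{k₁} is finer than f is also such that ⊲_{k₂} is finer than f. -/

import Mathlib

/-- The well-inside relation of a frame: `b` is well inside `a` iff `bᶜ ⊔ a = ⊤`. -/
def WellInside {L : Type*} [Order.Frame L] (b a : L) : Prop := bᶜ ⊔ a = ⊤

/-- A frame is regular if every element is the join of the elements well inside it. -/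
def IsRegularFrame (L : Type*) [Order.Frame L] : Prop :=
  ∀ a : L, a = sSup {b | WellInside b a}

/-- A frame is compact if `⊤` is a compact element. -/
def IsCompactFrame (L : Type*) [Order.Frame L] : Prop :=
  ∀ S : Set L, ⊤ ≤ sSup S → ∃ T : Set L, T ⊆ S ∧ T.Finite ∧ ⊤ ≤ sSup T

/-- A relation on `P` is closed under conditions (1)–(5) of a strong inclusion. -/
def ClosedUnder15 {L : Type*} [Order.Frame L] (P : Set L) (r : L → L → Prop) : Prop :=
  (r ⊥ ⊥ ∧ r ⊤ ⊤) ∧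
  (∀ x a b y, x ∈ P → y ∈ P → x ≤ a → r a b → b ≤ y → r x y) ∧
  (∀ x a b, r x a → r x b → r x (a ⊓ b)) ∧
  (∀ x y a, r x a → r y a → r (x ⊔ y) a) ∧
  (∀ a b, r a b → r bᶜ aᶜ)

/-- The smallest relation containing `R` and closed under conditions (1)–(5) of a
strong inclusion on `P`: the intersection of all such relations. -/
def leastClosed15 {L : Type*} [Order.Frame L] (P : Set L) (R : L → L → Prop) :
    L → L → Prop :=
  fun x y => ∀ r : L → L → Prop, (∀ a b, R a b → r a b) → ClosedUnder15 P r → r x y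

/-- The strong inclusion associated with a compactification `k : M → L`. -/
def kIncl {M L : Type*} [Order.Frame M] [Order.Frame L] (k : FrameHom M L) :
    L → L → Prop :=
  leastClosed15 Set.univ
    (fun x y => ∃ a b : M, WellInside b a ∧ x = k b ∧ y = k a)

/-- The relation `r` on `L` is finer than the frame homomorphism `f : L' → L`. -/
def Finer {L' L : Type*} [Order.Frame L'] [Order.Frame L]
    (r : L → L → Prop) (f : FrameHom L' L) : Prop :=
  ∀ x y : L', WellInside y x → ∃ p p' : L, f y ≤ p ∧ r p p' ∧ p' ≤ f x

namespace CompAux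
variable {L M : Type*} [Order.Frame L] [Order.Frame M]

variable {L M : Type*} [Order.Frame L] [Order.Frame M]

lemma wi_le {b a : L} (h : WellInside b a) : b ≤ a := by
  have : b ⊓ (bᶜ ⊔ a) = b := by rw [h, inf_top_eq]
  calc b = b ⊓ (bᶜ ⊔ a) := this.symm
    _ = (b ⊓ bᶜ) ⊔ (b ⊓ a) := inf_sup_left b bᶜ a
    _ ≤ a := by rw [inf_compl_self]; simp

lemma wi_mono {b' b a a' : L} (h1 : b' ≤ b) (h : WellInside b a) (h2 : a ≤ a') :
    WellInside b' a' := by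
  rw [WellInside, eq_top_iff, ← h]
  exact sup_le_sup (compl_anti h1) h2

lemma wi_bot (a : L) : WellInside ⊥ a := by simp [WellInside]

lemma wi_top (a : L) : WellInside a ⊤ := by simp [WellInside]

lemma wi_sup {b a b' a' : L} (h : WellInside b a) (h' : WellInside b' a') :
    WellInside (b ⊔ b') (a ⊔ a') := by
  rw [WellInside, compl_sup, eq_top_iff]
  calc (⊤:L) = (bᶜ ⊔ a) ⊓ (b'ᶜ ⊔ a') := by rw [h, h', inf_top_eq]
    _ ≤ (bᶜ ⊓ b'ᶜ) ⊔ (a ⊔ a') := by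
        rw [inf_sup_left, inf_sup_right, inf_sup_right]
        apply sup_le (sup_le _ _) (sup_le _ _)
        · exact le_sup_left
        · exact le_sup_of_le_right (le_sup_of_le_left inf_le_left)
        · exact le_sup_of_le_right (le_sup_of_le_right inf_le_right)
        · exact le_sup_of_le_right (le_sup_of_le_left inf_le_left)

lemma wi_inf {b a b' a' : L} (h : WellInside b a) (h' : WellInside b' a') :
    WellInside (b ⊓ b') (a ⊓ a') := by
  rw [WellInside, eq_top_iff]
  have hc : bᶜ ≤ (b ⊓ b')ᶜ := compl_anti inf_le_left
  have hc' : b'ᶜ ≤ (b ⊓ b')ᶜ := compl_anti inf_le_right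
  calc (⊤:L) = (bᶜ ⊔ a) ⊓ (b'ᶜ ⊔ a') := by rw [h, h', inf_top_eq]
    _ ≤ (b ⊓ b')ᶜ ⊔ (a ⊓ a') := by
        rw [inf_sup_left, inf_sup_right, inf_sup_right]
        apply sup_le (sup_le _ _) (sup_le _ _)
        · exact le_sup_of_le_left (inf_le_left.trans hc)
        · exact le_sup_of_le_left (inf_le_right.trans hc')
        · exact le_sup_of_le_left (inf_le_left.trans hc)
        · exact le_sup_right

lemma wi_nn {b a : L} (h : WellInside b a) : WellInside bᶜᶜ a := by
  rw [WellInside, compl_compl_compl]; exact h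

lemma wi_map (f : FrameHom M L) {b a : M} (h : WellInside b a) :
    WellInside (f b) (f a) := by
  have hbb : bᶜ ⊓ b = (⊥ : M) := by rw [inf_comm, inf_compl_self]
  have h1 : f bᶜ ≤ (f b)ᶜ := by
    refine le_compl_iff_disjoint_right.2 (disjoint_iff.2 ?_)
    rw [← map_inf, hbb, map_bot]
  rw [WellInside, eq_top_iff]
  calc (⊤:L) = f (bᶜ ⊔ a) := by rw [h, map_top]
    _ = f bᶜ ⊔ f a := map_sup f _ _
    _ ≤ (f b)ᶜ ⊔ f a := sup_le_sup h1 le_rfl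

lemma map_compl (k : FrameHom M L) (hd : ∀ a : M, k a = ⊥ → a = ⊥)
    (hs : Function.Surjective k) (m : M) : k mᶜ = (k m)ᶜ := by
  apply le_antisymm
  · refine le_compl_iff_disjoint_right.2 (disjoint_iff.2 ?_)
    have : mᶜ ⊓ m = (⊥ : M) := by rw [inf_comm, inf_compl_self]
    rw [← map_inf, this, map_bot]
  · obtain ⟨s, hsp⟩ := hs (k m)ᶜ
    have h1 : k (s ⊓ m) = ⊥ := by
      rw [map_inf, hsp, inf_comm, inf_compl_self]
    have hsm : s ⊓ m = ⊥ := hd _ h1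
    have h2 : s ≤ mᶜ := le_compl_iff_disjoint_right.2 (disjoint_iff.2 hsm)
    rw [← hsp]; exact OrderHomClass.mono k h2

lemma le_of_wi_img (k : FrameHom M L) (hd : ∀ a : M, k a = ⊥ → a = ⊥)
    (hs : Function.Surjective k) {b c d : M}
    (h1 : k b ≤ k c) (h2 : WellInside c d) : b ≤ d := by
  have hb : k (b ⊓ cᶜ) = ⊥ := by
    rw [map_inf, map_compl k hd hs]
    have h3 := inf_le_inf h1 (le_refl (k c)ᶜ)
    rw [inf_compl_self] at h3
    exact le_bot_iff.1 h3
  have hbc : b ⊓ cᶜ = ⊥ := hd _ hb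
  have hbcc : b ≤ cᶜᶜ := le_compl_iff_disjoint_right.2 (disjoint_iff.2 hbc)
  exact hbcc.trans (wi_le (wi_nn h2))

lemma wi_sSup_finite {a : M} {T : Set M} (hT : T.Finite)
    (h : ∀ c ∈ T, WellInside c a) : WellInside (sSup T) a := by
  revert h
  refine Set.Finite.induction_on _ hT (fun _ => by simpa using wi_bot a) ?_
  intro x s hxs hsfin ih h
  rw [sSup_insert]
  have := wi_sup (h x (Set.mem_insert _ _)) (ih fun c hc => h c (Set.mem_insert_of_mem _ hc))
  simpa using this

lemma interpolate (hc : IsCompactFrame M) (hr : IsRegularFrame M)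
    {b a : M} (h : WellInside b a) : ∃ c, WellInside b c ∧ WellInside c a := by
  have htop : ⊤ ≤ sSup (insert bᶜ {c | WellInside c a}) := by
    rw [sSup_insert, ← hr a]; rw [WellInside] at h; exact h.ge
  obtain ⟨T, hTsub, hTfin, hTtop⟩ := hc _ htop
  refine ⟨sSup (T \ {bᶜ}), ?_, ?_⟩
  · rw [WellInside, eq_top_iff]
    refine hTtop.trans (sSup_le fun x hx => ?_)
    by_cases hxb : x = bᶜ
    · exact hxb.le.trans le_sup_left
    · have hmem : x ∈ T \ {bᶜ} := ⟨hx, hxb⟩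
      exact (le_sSup hmem).trans le_sup_right
  · refine wi_sSup_finite hTfin.diff fun c hc' => ?_
    rcases hTsub hc'.1 with h' | h'
    · exact absurd h' hc'.2
    · exact h'

lemma split (hc : IsCompactFrame M) (hr : IsRegularFrame M)
    {y m n : M} (h : WellInside y (m ⊔ n)) :
    ∃ y₁ y₂, WellInside y₁ m ∧ WellInside y₂ n ∧ y ≤ y₁ ⊔ y₂ := by
  set Dm := {c | WellInside c m} with hDm
  set Dn := {c | WellInside c n} with hDn
  have htop : ⊤ ≤ sSup (insert yᶜ (Dm ∪ Dn)) := by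
    rw [sSup_insert, sSup_union, ← hr m, ← hr n]
    rw [WellInside] at h; exact h.ge
  obtain ⟨T, hTsub, hTfin, hTtop⟩ := hc _ htop
  set m' := sSup (T ∩ Dm) with hm'
  set n' := sSup (T ∩ Dn) with hn'
  have hm'wi : WellInside m' m := wi_sSup_finite (hTfin.inter_of_left _) fun c hc' => hc'.2
  have hn'wi : WellInside n' n := wi_sSup_finite (hTfin.inter_of_left _) fun c hc' => hc'.2
  have hcover : (⊤:M) ≤ yᶜ ⊔ (m' ⊔ n') := by
    refine hTtop.trans (sSup_le fun x hx => ?_)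
    rcases hTsub hx with h' | h'
    · exact h'.le.trans le_sup_left
    · rcases h' with h' | h'
      · exact le_sup_of_le_right (le_sup_of_le_left (le_sSup ⟨hx, h'⟩))
      · exact le_sup_of_le_right (le_sup_of_le_right (le_sSup ⟨hx, h'⟩))
  refine ⟨y ⊓ m', y ⊓ n', wi_mono inf_le_right hm'wi le_rfl,
    wi_mono inf_le_right hn'wi le_rfl, ?_⟩
  calc y = y ⊓ ⊤ := (inf_top_eq y).symm
    _ ≤ y ⊓ (yᶜ ⊔ (m' ⊔ n')) := inf_le_inf le_rfl hcover
    _ = (y ⊓ yᶜ) ⊔ (y ⊓ m' ⊔ y ⊓ n') := by rw [inf_sup_left, inf_sup_left]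
    _ ≤ y ⊓ m' ⊔ y ⊓ n' := by rw [inf_compl_self]; simp


lemma kIncl_elim (k : FrameHom M L) (hd : ∀ a : M, k a = ⊥ → a = ⊥)
    (hs : Function.Surjective k) {x y : L} (h : kIncl k x y) :
    ∃ a b : M, WellInside b a ∧ x ≤ k b ∧ k a ≤ y := by
  refine h (fun x y => ∃ a b : M, WellInside b a ∧ x ≤ k b ∧ k a ≤ y) ?_ ?_
  · rintro p q ⟨a, b, hwi, rfl, rfl⟩
    exact ⟨a, b, hwi, le_rfl, le_rfl⟩
  · refine ⟨⟨⟨⊥, ⊥, wi_bot ⊥, bot_le, (map_bot k).le⟩,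
      ⟨⊤, ⊤, wi_top ⊤, (map_top k).ge, le_top⟩⟩, ?_, ?_, ?_, ?_⟩
    · rintro x a b y - - hxa ⟨a', b', hwi, hab, hba⟩ hby
      exact ⟨a', b', hwi, hxa.trans hab, hba.trans hby⟩
    · rintro x a b ⟨a₁, b₁, w₁, h₁, h₁'⟩ ⟨a₂, b₂, w₂, h₂, h₂'⟩
      refine ⟨a₁ ⊓ a₂, b₁ ⊓ b₂, wi_inf w₁ w₂, ?_, ?_⟩
      · rw [map_inf]; exact le_inf h₁ h₂
      · rw [map_inf]; exact inf_le_inf h₁' h₂'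
    · rintro x y a ⟨a₁, b₁, w₁, h₁, h₁'⟩ ⟨a₂, b₂, w₂, h₂, h₂'⟩
      refine ⟨a₁ ⊔ a₂, b₁ ⊔ b₂, wi_sup w₁ w₂, ?_, ?_⟩
      · rw [map_sup]; exact sup_le (h₁.trans le_sup_left) (h₂.trans le_sup_right)
      · rw [map_sup]; exact sup_le h₁' h₂'
    · rintro a b ⟨d, c, w, hac, hdb⟩
      refine ⟨cᶜ, dᶜ, ?_, ?_, ?_⟩
      · rw [WellInside, eq_top_iff, ← w]
        exact sup_le le_sup_right (le_compl_compl.trans le_sup_left)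
      · rw [map_compl k hd hs]; exact compl_anti hdb
      · rw [map_compl k hd hs]; exact compl_anti hac
end CompAux

lemma exists_hom {L M₁ M₂ : Type*} [Order.Frame L] [Order.Frame M₁] [Order.Frame M₂]
    (hM₁c : IsCompactFrame M₁) (hM₁r : IsRegularFrame M₁)
    (k₁ : FrameHom M₁ L) (k₂ : FrameHom M₂ L)
    (hd₂ : ∀ a : M₂, k₂ a = ⊥ → a = ⊥) (hs₂ : Function.Surjective k₂)
    (hstar : ∀ y x : M₁, WellInside y x →
      ∃ c e : M₂, WellInside c e ∧ k₁ y ≤ k₂ c ∧ k₂ e ≤ k₁ x) :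
    ∃ h : FrameHom M₁ M₂, k₁ = k₂.comp h := by
  classical
  set S : M₁ → Set M₂ := fun m => {b | ∃ y, WellInside y m ∧ k₂ b ≤ k₁ y} with hS
  set h₀ : M₁ → M₂ := fun m => sSup (S m) with hh₀
  have hmono : ∀ {m n : M₁}, m ≤ n → h₀ m ≤ h₀ n := by
    intro m n hmn
    refine sSup_le_sSup fun b hb => ?_
    obtain ⟨y, hy, hk⟩ := hb
    exact ⟨y, CompAux.wi_mono le_rfl hy hmn, hk⟩
  have claimA : ∀ y m : M₁, WellInside y m →
      ∃ c : M₂, k₁ y ≤ k₂ c ∧ WellInside c (h₀ m) := by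
    intro y m hym
    obtain ⟨y', hyy', hy'm⟩ := CompAux.interpolate hM₁c hM₁r hym
    obtain ⟨c, e, hce, hyc, hey'⟩ := hstar y y' hyy'
    have hem : e ∈ S m := ⟨y', hy'm, hey'⟩
    exact ⟨c, hyc, CompAux.wi_mono le_rfl hce (le_sSup hem)⟩
  have kimg : ∀ m : M₁, k₂ (h₀ m) = k₁ m := by
    intro m
    apply le_antisymm
    · rw [hh₀, map_sSup]
      refine sSup_le ?_
      rintro _ ⟨b, ⟨y, hy, hk⟩, rfl⟩
      exact hk.trans (OrderHomClass.mono k₁ (CompAux.wi_le hy))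
    · conv_lhs => rw [hM₁r m]
      rw [map_sSup]
      refine sSup_le ?_
      rintro _ ⟨y, hy, rfl⟩
      obtain ⟨c, h1, h2⟩ := claimA y m hy
      exact h1.trans (OrderHomClass.mono k₂ (CompAux.wi_le h2))
  have hbot : h₀ ⊥ = ⊥ := by
    refine le_bot_iff.1 (sSup_le ?_)
    rintro b ⟨y, hy, hk⟩
    have hyb : y ≤ ⊥ := CompAux.wi_le hy
    have : k₂ b = ⊥ := le_bot_iff.1 (hk.trans (by
      calc k₁ y ≤ k₁ ⊥ := OrderHomClass.mono k₁ hyb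
        _ = ⊥ := map_bot k₁))
    exact (hd₂ b this).le
  have hsup2 : ∀ m n : M₁, h₀ (m ⊔ n) ≤ h₀ m ⊔ h₀ n := by
    intro m n
    refine sSup_le ?_
    rintro b ⟨y, hy, hkb⟩
    obtain ⟨y₁, y₂, hy₁, hy₂, hyle⟩ := CompAux.split hM₁c hM₁r hy
    obtain ⟨c₁, hc₁a, hc₁b⟩ := claimA y₁ m hy₁
    obtain ⟨c₂, hc₂a, hc₂b⟩ := claimA y₂ n hy₂
    have hkey : k₂ b ≤ k₂ (c₁ ⊔ c₂) := by
      refine hkb.trans ((OrderHomClass.mono k₁ hyle).trans ?_)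
      rw [map_sup, map_sup]
      exact sup_le (hc₁a.trans le_sup_left) (hc₂a.trans le_sup_right)
    exact CompAux.le_of_wi_img k₂ hd₂ hs₂ hkey (CompAux.wi_sup hc₁b hc₂b)
  have hfin : ∀ T : Set M₁, T.Finite → h₀ (sSup T) ≤ ⨆ m ∈ T, h₀ m := by
    intro T hT
    refine Set.Finite.induction_on _ hT (by simp [hbot]) ?_
    intro x s hxs hsfin ih
    rw [sSup_insert]
    refine (hsup2 x (sSup s)).trans ?_
    rw [iSup_insert]
    exact sup_le_sup le_rfl ih
  have hsSup : ∀ Q : Set M₁, h₀ (sSup Q) = ⨆ m ∈ Q, h₀ m := by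
    intro Q
    apply le_antisymm
    · refine sSup_le ?_
      rintro b ⟨y, hy, hkb⟩
      have htop : ⊤ ≤ sSup (insert yᶜ Q) := by
        rw [sSup_insert]; rw [WellInside] at hy; exact hy.ge
      obtain ⟨T, hTsub, hTfin, hTtop⟩ := hM₁c _ htop
      have hy' : WellInside y (sSup (T \ {yᶜ})) := by
        rw [WellInside, eq_top_iff]
        refine hTtop.trans (sSup_le fun x hx => ?_)
        by_cases hxy : x = yᶜ
        · exact hxy.le.trans le_sup_left
        · have hmem : x ∈ T \ {yᶜ} := ⟨hx, hxy⟩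
          exact (le_sSup hmem).trans le_sup_right
      have hb : b ≤ h₀ (sSup (T \ {yᶜ})) := le_sSup ⟨y, hy', hkb⟩
      have hsub : T \ {yᶜ} ⊆ Q := by
        rintro x ⟨hx, hxy⟩
        rcases hTsub hx with h' | h'
        · exact absurd h' hxy
        · exact h'
      refine hb.trans ((hfin _ hTfin.diff).trans ?_)
      exact biSup_mono hsub
    · exact iSup₂_le fun m hm => hmono (le_sSup hm)
  have hinf : ∀ m n : M₁, h₀ (m ⊓ n) = h₀ m ⊓ h₀ n := by
    intro m n
    apply le_antisymm
    · exact le_inf (hmono inf_le_left) (hmono inf_le_right)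
    · rw [hh₀]
      simp only []
      rw [sSup_inf_sSup]
      refine iSup₂_le ?_
      rintro ⟨b, b'⟩ ⟨⟨y, hy, hk⟩, ⟨y', hy', hk'⟩⟩
      refine le_sSup ⟨y ⊓ y', CompAux.wi_inf hy hy', ?_⟩
      rw [map_inf, map_inf]
      exact inf_le_inf hk hk'
  have htop : h₀ ⊤ = ⊤ := by
    apply le_antisymm le_top
    refine le_sSup ⟨⊤, CompAux.wi_top ⊤, ?_⟩
    rw [map_top, map_top]
  refine ⟨⟨⟨⟨h₀, fun m n => hinf m n⟩, htop⟩, fun s => ?_⟩, ?_⟩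
  · rw [sSup_image]; exact hsSup s
  · ext m
    exact (kimg m).symm
/-- Two compactifications `k₁ : M₁ → L` and `k₂ : M₂ → L` satisfy `k₁ ≤ k₂`
(i.e. `k₁` factors through `k₂`) iff `C_{k₁} ⊆ C_{k₂}`. -/
theorem compactification_le_iff_classes_subset
    {L M₁ M₂ : Type u} [Order.Frame L] [Order.Frame M₁] [Order.Frame M₂]
    (hM₁c : IsCompactFrame M₁) (hM₁r : IsRegularFrame M₁)
    (k₁ : FrameHom M₁ L) (hd₁ : ∀ a : M₁, k₁ a = ⊥ → a = ⊥)
    (hs₁ : Function.Surjective k₁)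
    (hM₂c : IsCompactFrame M₂) (hM₂r : IsRegularFrame M₂)
    (k₂ : FrameHom M₂ L) (hd₂ : ∀ a : M₂, k₂ a = ⊥ → a = ⊥)
    (hs₂ : Function.Surjective k₂) :
    (∃ h : FrameHom M₁ M₂, k₁ = k₂.comp h) ↔
      (∀ (L' : Type u) (_ : Order.Frame L'),
        IsCompactFrame L' → IsRegularFrame L' →
        ∀ f : FrameHom L' L, Finer (kIncl k₁) f → Finer (kIncl k₂) f) := by
  constructor
  · rintro ⟨h, hk⟩ L' _ _ _ f hf x y hyx
    obtain ⟨p, p', h1, h2, h3⟩ := hf x y hyx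
    refine ⟨p, p', h1, ?_, h3⟩
    intro r hR hcl
    refine h2 r ?_ hcl
    rintro u v ⟨a, b, hwi, rfl, rfl⟩
    have hkb : k₁ b = k₂ (h b) := by rw [hk]; rfl
    have hka : k₁ a = k₂ (h a) := by rw [hk]; rfl
    exact hR _ _ ⟨h a, h b, CompAux.wi_map h hwi, hkb, hka⟩
  · intro H
    have hself : Finer (kIncl k₁) k₁ := fun x y hyx =>
      ⟨k₁ y, k₁ x, le_rfl, fun r hR _ => hR _ _ ⟨x, y, hyx, rfl, rfl⟩, le_rfl⟩
    have hF : Finer (kIncl k₂) k₁ := H M₁ inferInstance hM₁c hM₁r k₁ hself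
    have hstar : ∀ y x : M₁, WellInside y x →
        ∃ c e : M₂, WellInside c e ∧ k₁ y ≤ k₂ c ∧ k₂ e ≤ k₁ x := by
      intro y x hyx
      obtain ⟨p, p', h1, h2, h3⟩ := hF x y hyx
      obtain ⟨a, b, hwi, hpb, hap'⟩ := CompAux.kIncl_elim k₂ hd₂ hs₂ h2
      exact ⟨b, a, hwi, h1.trans hpb, hap'.trans h3⟩
    exact exists_hom hM₁c hM₁r k₁ k₂ hd₂ hs₂ hstar
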